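/- Let σ > 0, a > 0 and 0 < α < 1, let z_α = Φ^{-1}(1−α), and let θ ∈ [0, aσ]. If X is a real random variable with the Gaussian distribution N(θ, σ²), then P( θ ≤ max(0, min(X + z_α σ, aσ)) ) ≥ 1 − α; that is, the interval [0, max(0, min(X + z_α σ, aσ))] covers θ with probability at least 1 − α. -/

import Mathlib

open MeasureTheory ProbabilityTheory

/-- The standard normal density `φ`. -/
noncomputable def stdNormalPDF (t : ℝ) : ℝ :=
  (Real.sqrt (2 * Real.pi))⁻¹ * Real.exp (-t^2/2)

/-- The standard normal cumulative distribution function `Φ`. -/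
noncomputable def stdNormalCDF (x : ℝ) : ℝ :=
  ∫ t in Set.Iic x, stdNormalPDF t

lemma stdNormalPDF_eq_gaussianPDFReal (t : ℝ) :
    stdNormalPDF t = gaussianPDFReal 0 1 t := by
  simp [stdNormalPDF, gaussianPDFReal, neg_div]

lemma stdNormal_Iic (z : ℝ) :
    gaussianReal 0 1 (Set.Iic z) = ENNReal.ofReal (stdNormalCDF z) := by
  rw [gaussianReal_apply_eq_integral 0 one_ne_zero, stdNormalCDF]
  simp_rw [stdNormalPDF_eq_gaussianPDFReal]

lemma stdNormal_Ici (z : ℝ) :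
    gaussianReal 0 1 (Set.Ici (-z)) = ENNReal.ofReal (stdNormalCDF z) := by
  have hmap : (gaussianReal 0 1).map (fun x : ℝ => (-1 : ℝ) * x) = gaussianReal 0 1 := by
    rw [gaussianReal_map_const_mul (-1 : ℝ)]
    norm_num
  have := congrArg (fun μ : Measure ℝ => μ (Set.Iic z)) hmap
  rw [Measure.map_apply (by fun_prop) measurableSet_Iic] at this
  have hpre : (fun x : ℝ => (-1 : ℝ) * x) ⁻¹' Set.Iic z = Set.Ici (-z) := by
    ext x; simp [neg_le]
  rw [hpre] at this
  rw [this, stdNormal_Iic]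

lemma gaussian_Ici (θ σ z : ℝ) (hσ : 0 < σ) :
    gaussianReal θ (Real.toNNReal (σ^2)) (Set.Ici (θ - z * σ))
      = ENNReal.ofReal (stdNormalCDF z) := by
  have hmap : (gaussianReal 0 1).map (fun x : ℝ => σ * x + θ)
      = gaussianReal θ (Real.toNNReal (σ^2)) := by
    have h1 : (gaussianReal 0 1).map (fun x : ℝ => σ * x) = gaussianReal 0 (Real.toNNReal (σ^2)) := by
      rw [show (fun x : ℝ => σ * x) = (σ * ·) from rfl, gaussianReal_map_const_mul σ]
      congr 1
      · ring
      · ext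
        simp [Real.coe_toNNReal _ (sq_nonneg σ)]
    have h2 : (fun x : ℝ => σ * x + θ) = (fun y : ℝ => y + θ) ∘ (fun x : ℝ => σ * x) := rfl
    rw [h2, ← Measure.map_map (by fun_prop) (by fun_prop), h1,
      gaussianReal_map_add_const θ, zero_add]
  rw [← hmap, Measure.map_apply (by fun_prop) measurableSet_Ici]
  have hpre : (fun x : ℝ => σ * x + θ) ⁻¹' Set.Ici (θ - z * σ) = Set.Ici (-z) := by
    ext x
    simp only [Set.mem_preimage, Set.mem_Ici]
    constructor
    · intro h
      nlinarith
    · intro h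
      nlinarith
  rw [hpre, stdNormal_Ici]

/-- Coverage of the optimal one-sided truncated interval in the proof of Theorem 1 of
Cai, Low and Xia (2013): if `θ ∈ [0, aσ]`, `X ~ N(θ, σ²)` and `Φ(z_α) = 1 − α`, then the
interval `[0, max(0, min(X + z_α σ, aσ))]` covers `θ` with probability at least `1 − α`. -/
theorem coverage_truncated_interval
    {Ω : Type*} [MeasurableSpace Ω] (P : Measure Ω) [IsProbabilityMeasure P]
    (σ a α θ zα : ℝ) (hσ : 0 < σ) (ha : 0 < a) (hα0 : 0 < α) (hα1 : α < 1)
    (hz : stdNormalCDF zα = 1 - α)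
    (hθ0 : 0 ≤ θ) (hθ1 : θ ≤ a * σ)
    (X : Ω → ℝ) (hX : P.map X = gaussianReal θ (Real.toNNReal (σ^2))) :
    ENNReal.ofReal (1 - α) ≤ P {ω | θ ≤ max 0 (min (X ω + zα * σ) (a * σ))} := by
  have hXm : AEMeasurable X P := by
    by_contra h
    rw [Measure.map_of_not_aemeasurable h] at hX
    have : (gaussianReal θ (Real.toNNReal (σ^2))) Set.univ = 1 := measure_univ
    rw [← hX] at this
    simp at this
  have hsub : {ω | θ - zα * σ ≤ X ω} ⊆ {ω | θ ≤ max 0 (min (X ω + zα * σ) (a * σ))} := by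
    intro ω hω
    simp only [Set.mem_setOf_eq] at hω ⊢
    have h1 : θ ≤ X ω + zα * σ := by linarith
    have : θ ≤ min (X ω + zα * σ) (a * σ) := le_min h1 hθ1
    exact this.trans (le_max_right _ _)
  have key : P {ω | θ - zα * σ ≤ X ω} = ENNReal.ofReal (1 - α) := by
    have : {ω | θ - zα * σ ≤ X ω} = X ⁻¹' Set.Ici (θ - zα * σ) := rfl
    rw [this, ← Measure.map_apply_of_aemeasurable hXm measurableSet_Ici, hX,
      gaussian_Ici θ σ zα hσ, hz]
  rw [← key]
  exact measure_mono hsub
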